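/- The set of all finite sequences of positive integers (paths) with value of their type at most a given natural number w is finite, and its cardinality is at most ∑ over types (x,y) with y·2^y·x^y ≤ w of (x^y - (x-1)^y). -/

import Mathlib

private lemma le_foldr_max {p : ℕ} {l : List ℕ} (hp : p ∈ l) : p ≤ l.foldr max 0 := by
  induction l with
  | nil => simp at hp
  | cons a t ih =>
    simp only [List.foldr]
    rcases List.mem_cons.mp hp with h | h
    · exact h ▸ le_max_left _ _
    · exact le_trans (ih h) (le_max_right _ _)

private lemma foldr_max_mem (l : List ℕ) : l.foldr max 0 = 0 ∨ l.foldr max 0 ∈ l := by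
  induction l with
  | nil => left; rfl
  | cons a t ih =>
    simp only [List.foldr]
    rcases max_choice a (t.foldr max 0) with h | h
    · right; rw [h]; exact List.mem_cons_self
    · rw [h]
      rcases ih with h' | h'
      · left; exact h'
      · right; exact List.mem_cons_of_mem _ h'

private lemma lists_finite (n m : ℕ) :
    {l : List ℕ | l.length ≤ n ∧ ∀ p ∈ l, p ≤ m}.Finite := by
  induction n with
  | zero =>
    apply Set.Finite.subset (Set.finite_singleton ([] : List ℕ))
    rintro l ⟨hl, -⟩
    simpa using List.length_eq_zero_iff.mp (Nat.le_zero.mp hl)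
  | succ n ih =>
    apply Set.Finite.subset
      (Set.Finite.insert [] (Set.Finite.image (fun p : ℕ × List ℕ => p.1 :: p.2)
        ((Set.finite_Icc 0 m).prod ih)))
    rintro l ⟨hl, hm⟩
    cases l with
    | nil => exact Set.mem_insert _ _
    | cons a t =>
      right
      exact ⟨(a, t), ⟨Set.mem_Icc.mpr ⟨Nat.zero_le _, hm a (by simp)⟩,
        by simpa using hl, fun p hp => hm p (List.mem_cons_of_mem _ hp)⟩, rfl⟩

private lemma fiber_card_le (m δ : ℕ) (hm : 1 ≤ m) (hδ : 1 ≤ δ) (F : Finset (List ℕ))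
    (hF : ∀ l ∈ F, l.foldr max 0 = m ∧ l.length = δ ∧ ∀ p ∈ l, 1 ≤ p) :
    F.card ≤ m ^ δ - (m - 1) ^ δ := by
  set A : Finset (Fin δ → ℕ) := Fintype.piFinset (fun _ => Finset.Icc 1 m) with hA
  set B : Finset (Fin δ → ℕ) := Fintype.piFinset (fun _ => Finset.Icc 1 (m - 1)) with hB
  have hBA : B ⊆ A := by
    intro f hf
    rw [hB, Fintype.mem_piFinset] at hf
    rw [hA, Fintype.mem_piFinset]
    intro i
    have := hf i
    rw [Finset.mem_Icc] at this ⊢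
    exact ⟨this.1, le_trans this.2 (Nat.sub_le _ _)⟩
  have hcard : (A \ B).card = m ^ δ - (m - 1) ^ δ := by
    rw [Finset.card_sdiff_of_subset hBA, hA, hB, Fintype.card_piFinset, Fintype.card_piFinset]
    simp [Nat.card_Icc]
  rw [← hcard]
  apply Finset.card_le_card_of_injOn (fun l => fun i : Fin δ => l.getD i 0)
  · intro l hl
    obtain ⟨hmax, hlen, hpos⟩ := hF l hl
    simp only [Finset.mem_coe]
    rw [Finset.mem_sdiff]
    constructor
    · rw [hA, Fintype.mem_piFinset]
      intro i
      have hi : (i : ℕ) < l.length := by rw [hlen]; exact i.isLt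
      rw [Finset.mem_Icc, List.getD_eq_getElem l 0 hi]
      have hmem : l[(i:ℕ)] ∈ l := List.getElem_mem _
      exact ⟨hpos _ hmem, hmax ▸ le_foldr_max hmem⟩
    · rw [hB, Fintype.mem_piFinset]
      push_neg
      rcases foldr_max_mem l with h0 | hmem
      · omega
      · rw [hmax] at hmem
        obtain ⟨i, hi, hgi⟩ := List.mem_iff_getElem.mp hmem
        refine ⟨⟨i, by omega⟩, ?_⟩
        rw [List.getD_eq_getElem l 0 (by simpa using hi)]
        simp only [Finset.mem_Icc, not_and, not_le]
        intro _
        omega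
  · intro l₁ h₁ l₂ h₂ heq
    obtain ⟨-, hlen₁, -⟩ := hF l₁ h₁
    obtain ⟨-, hlen₂, -⟩ := hF l₂ h₂
    apply List.ext_getElem (by rw [hlen₁, hlen₂])
    intro i hi₁ hi₂
    have := congrFun heq ⟨i, by omega⟩
    simp only at this
    rwa [List.getD_eq_getElem l₁ 0 hi₁, List.getD_eq_getElem l₂ 0 hi₂] at this

/-- The type of a nonempty path `π = (p_1,…,p_δ)` of positive integers is
`(max_i p_i, δ)` and its value is `δ·2^δ·m^δ` for type `(m,δ)`. The set of all such
paths of value at most `w` is finite, with cardinality at most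
`∑_{(x,y) : y·2^y·x^y ≤ w} (x^y - (x-1)^y)`. -/
theorem stmt8 (w : ℕ) :
    {π : List ℕ | π ≠ [] ∧ (∀ p ∈ π, 1 ≤ p) ∧
      π.length * 2 ^ π.length * (π.foldr max 0) ^ π.length ≤ w}.Finite ∧
    Nat.card {π : List ℕ | π ≠ [] ∧ (∀ p ∈ π, 1 ≤ p) ∧
      π.length * 2 ^ π.length * (π.foldr max 0) ^ π.length ≤ w} ≤
    ∑ q ∈ (Finset.Icc 1 w ×ˢ Finset.Icc 1 w).filter
      (fun q => q.2 * 2 ^ q.2 * q.1 ^ q.2 ≤ w), (q.1 ^ q.2 - (q.1 - 1) ^ q.2) := by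
  set S : Set (List ℕ) := {π : List ℕ | π ≠ [] ∧ (∀ p ∈ π, 1 ≤ p) ∧
      π.length * 2 ^ π.length * (π.foldr max 0) ^ π.length ≤ w} with hS
  -- basic bounds for members of S
  have hbounds : ∀ π ∈ S, 1 ≤ π.foldr max 0 ∧ π.foldr max 0 ≤ w ∧
      1 ≤ π.length ∧ π.length ≤ w := by
    rintro π ⟨hne, hpos, hval⟩
    set m := π.foldr max 0
    set δ := π.length
    have hδ1 : 1 ≤ δ := List.length_pos_iff.mpr hne
    obtain ⟨a, ha⟩ := List.exists_mem_of_ne_nil π hne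
    have hm1 : 1 ≤ m := le_trans (hpos a ha) (le_foldr_max ha)
    have hmδ : m ≤ m ^ δ := Nat.le_self_pow (by omega) m
    have h2δ : (1:ℕ) ≤ δ * 2 ^ δ := le_trans hδ1 (Nat.le_mul_of_pos_right δ (Nat.pow_pos (by norm_num) : 0 < 2 ^ δ))
    have hmw : m ≤ w := by
      calc m ≤ m ^ δ := hmδ
        _ ≤ δ * 2 ^ δ * m ^ δ := Nat.le_mul_of_pos_left _ (by omega)
        _ ≤ w := hval
    have hδw : δ ≤ w := by
      have : δ ≤ δ * 2 ^ δ * m ^ δ :=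
        Nat.le_mul_of_pos_right _ (Nat.pow_pos hm1 : 0 < m ^ δ) |>.trans' (Nat.le_mul_of_pos_right δ (Nat.pow_pos (by norm_num) : 0 < 2 ^ δ))
      omega
    exact ⟨hm1, hmw, hδ1, hδw⟩
  have hfin : S.Finite := by
    apply Set.Finite.subset (lists_finite w w)
    intro π hπ
    obtain ⟨hm1, hmw, hδ1, hδw⟩ := hbounds π hπ
    exact ⟨hδw, fun p hp => le_trans (le_foldr_max hp) hmw⟩
  refine ⟨hfin, ?_⟩
  rw [Nat.card_coe_set_eq, Set.ncard_eq_toFinset_card S hfin]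
  set T := (Finset.Icc 1 w ×ˢ Finset.Icc 1 w).filter
      (fun q => q.2 * 2 ^ q.2 * q.1 ^ q.2 ≤ w) with hT
  have hmap : ∀ π ∈ hfin.toFinset, (π.foldr max 0, π.length) ∈ T := by
    intro π hπ
    rw [Set.Finite.mem_toFinset] at hπ
    obtain ⟨hm1, hmw, hδ1, hδw⟩ := hbounds π hπ
    rw [hT, Finset.mem_filter, Finset.mem_product, Finset.mem_Icc, Finset.mem_Icc]
    exact ⟨⟨⟨hm1, hmw⟩, hδ1, hδw⟩, hπ.2.2⟩
  rw [Finset.card_eq_sum_card_fiberwise hmap]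
  apply Finset.sum_le_sum
  intro q hq
  rw [hT, Finset.mem_filter, Finset.mem_product, Finset.mem_Icc, Finset.mem_Icc] at hq
  apply fiber_card_le q.1 q.2 hq.1.1.1 hq.1.2.1
  intro l hl
  rw [Finset.mem_filter, Set.Finite.mem_toFinset] at hl
  obtain ⟨⟨hne, hpos, hval⟩, heq⟩ := hl
  have h1 : l.foldr max 0 = q.1 := congrArg Prod.fst heq
  have h2 : l.length = q.2 := congrArg Prod.snd heq
  exact ⟨h1, h2, hpos⟩
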